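/- Let Ω ⊆ ℝⁿ be an open set and let u, w : ℝⁿ → ℝ be nonnegative locally Lipschitz functions. Then J_Ω(min(u,w)) + J_Ω(max(u,w)) = J_Ω(u) + J_Ω(w), as an identity in [0,∞] (where min and max are taken pointwise). -/

import Mathlib

open MeasureTheory Metric Set Filter ENNReal NNReal

/-- The Alt–Caffarelli energy `J_D(u) = ∫_D (‖∇u‖² + 𝟙_{u>0})`, valued in `[0,∞]`. -/
noncomputable def JE {n : ℕ} (D : Set (EuclideanSpace ℝ (Fin n)))
    (u : EuclideanSpace ℝ (Fin n) → ℝ) : ℝ≥0∞ :=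
  ∫⁻ x in D, ((‖gradient u x‖₊ : ℝ≥0∞) ^ 2 + if 0 < u x then 1 else 0)

/-- `u` is a (nonnegative, locally Lipschitz) minimizer of `J` in the open set `Ω`:
for every nonnegative locally Lipschitz competitor `v` with `{v ≠ u}` a bounded subset
of `Ω`, one has `J_{Ω ∩ B}(u) ≤ J_{Ω ∩ B}(v)` for every open ball `B ⊇ {v ≠ u}`. -/
def IsMinimizer {n : ℕ} (Ω : Set (EuclideanSpace ℝ (Fin n)))
    (u : EuclideanSpace ℝ (Fin n) → ℝ) : Prop :=
  (∀ x, 0 ≤ u x) ∧ LocallyLipschitz u ∧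
  ∀ v : EuclideanSpace ℝ (Fin n) → ℝ, (∀ x, 0 ≤ v x) → LocallyLipschitz v →
    Bornology.IsBounded {x | v x ≠ u x} → {x | v x ≠ u x} ⊆ Ω →
    ∀ (c : EuclideanSpace ℝ (Fin n)) (r : ℝ), {x | v x ≠ u x} ⊆ Metric.ball c r →
      JE (Ω ∩ Metric.ball c r) u ≤ JE (Ω ∩ Metric.ball c r) v


open Topology in
lemma locallyLipschitz_ae_differentiableAt {n : ℕ} {f : EuclideanSpace ℝ (Fin n) → ℝ}
    (hf : LocallyLipschitz f) :
    ∀ᵐ x ∂(volume : Measure (EuclideanSpace ℝ (Fin n))), DifferentiableAt ℝ f x := by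
  rw [ae_iff]
  apply measure_null_of_locally_null
  intro x _
  obtain ⟨K, t, ht, hlip⟩ := hf x
  obtain ⟨r, hr0, hball⟩ := Metric.mem_nhds_iff.1 ht
  obtain ⟨g, hg, hfg⟩ := (hlip.mono hball).extend_real
  refine ⟨{y | ¬ DifferentiableAt ℝ f y} ∩ Metric.ball x r,
    inter_mem_nhdsWithin _ (Metric.ball_mem_nhds x hr0), ?_⟩
  have hsub : {y | ¬ DifferentiableAt ℝ f y} ∩ Metric.ball x r
      ⊆ {y | ¬ DifferentiableAt ℝ g y} := by
    rintro y ⟨hy, hyb⟩ hgy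
    exact hy (hgy.congr_of_eventuallyEq
      (eventually_of_mem (isOpen_ball.mem_nhds hyb) fun z hz => hfg hz))
  refine measure_mono_null hsub ?_
  have := hg.ae_differentiableAt (μ := (volume : Measure (EuclideanSpace ℝ (Fin n))))
  simpa [ae_iff] using this

open Topology in
lemma fderiv_ae_zero_of_zero_set {n : ℕ} {g : EuclideanSpace ℝ (Fin n) → ℝ}
    (hg : Continuous g) :
    ∀ᵐ x ∂(volume : Measure (EuclideanSpace ℝ (Fin n))),
      g x = 0 → DifferentiableAt ℝ g x → fderiv ℝ g x = 0 := by
  set μ := (volume : Measure (EuclideanSpace ℝ (Fin n)))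
  set E := g ⁻¹' {0} with hE
  have hEm : MeasurableSet E := (isClosed_singleton.preimage hg).measurableSet
  filter_upwards [Besicovitch.ae_tendsto_measure_inter_div_of_measurableSet μ hEm]
    with x hx hx0 hdiff
  have hxE : x ∈ E := by simpa [hE] using hx0
  simp only [Set.indicator_of_mem hxE, Pi.one_apply] at hx
  set L := fderiv ℝ g x with hL
  refine ContinuousLinearMap.ext fun v => ?_
  simp only [ContinuousLinearMap.zero_apply]
  -- key estimate
  have key : ∀ δ > (0:ℝ), ∀ ε > (0:ℝ), |L v| ≤ ‖L‖ * δ + ε * (‖v‖ + δ) := by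
    intro δ hδ ε hε
    -- nearby points of E in direction v
    have hnear : ∀ᶠ t in 𝓝[>] (0:ℝ),
        (E ∩ closedBall (x + t • v) (δ * t)).Nonempty := by
      by_contra h
      rw [Filter.not_eventually] at h
      have hvδ : (0:ℝ) < ‖v‖ + δ := by positivity
      set κ : ℝ≥0∞ := ENNReal.ofReal ((δ / (‖v‖ + δ)) ^ n) with hκ
      have hκ0 : κ ≠ 0 := by
        simp only [hκ, ne_eq, ENNReal.ofReal_eq_zero, not_le]
        positivity
      have hcomp : Tendsto (fun t : ℝ => (‖v‖ + δ) * t) (𝓝[>] 0) (𝓝[>] 0) := by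
        apply tendsto_nhdsWithin_of_tendsto_nhds_of_eventually_within
        · exact ((continuous_mul_left _).tendsto' 0 0 (mul_zero _)).mono_left
            nhdsWithin_le_nhds
        · filter_upwards [self_mem_nhdsWithin] with t ht
          exact mul_pos hvδ ht
      have htend := hx.comp hcomp
      have hlt : (1:ℝ≥0∞) - κ < 1 :=
        ENNReal.sub_lt_self one_ne_top one_ne_zero hκ0
      have hev : ∀ᶠ t in 𝓝[>] (0:ℝ),
          1 - κ < μ (E ∩ closedBall x ((‖v‖ + δ) * t)) / μ (closedBall x ((‖v‖ + δ) * t)) :=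
        htend.eventually (eventually_gt_nhds hlt)
      obtain ⟨t, ⟨hemp, hrat⟩, ht0⟩ :=
        ((h.and_eventually hev).and_eventually self_mem_nhdsWithin).exists
      rw [Set.not_nonempty_iff_eq_empty] at hemp
      set R := (‖v‖ + δ) * t with hR
      have hR0 : 0 < R := mul_pos hvδ ht0
      have hδt : (0:ℝ) < δ * t := mul_pos hδ ht0
      set y := x + t • v with hy
      have hsub : closedBall y (δ * t) ⊆ closedBall x R := by
        intro z hz
        rw [mem_closedBall] at hz ⊢
        have hdyx : dist y x ≤ t * ‖v‖ := by
          rw [hy, dist_eq_norm]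
          simp [norm_smul, abs_of_pos ht0, le_refl]
        calc dist z x ≤ dist z y + dist y x := dist_triangle _ _ _
          _ ≤ δ * t + t * ‖v‖ := add_le_add hz hdyx
          _ = R := by rw [hR]; ring
      have hdisj : Disjoint (E ∩ closedBall x R) (closedBall y (δ * t)) := by
        refine Set.disjoint_left.2 ?_
        rintro z ⟨hzE, _⟩ hzb
        exact Set.eq_empty_iff_forall_notMem.1 hemp z ⟨hzE, hzb⟩
      -- measure estimates
      have hadd : μ (E ∩ closedBall x R) + μ (closedBall y (δ * t)) ≤ μ (closedBall x R) := by
        rw [← measure_union hdisj measurableSet_closedBall]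
        exact measure_mono (Set.union_subset Set.inter_subset_right hsub)
      have hA0 : μ (closedBall x R) ≠ 0 := (measure_closedBall_pos μ x hR0).ne'
      have hAtop : μ (closedBall x R) ≠ ⊤ := measure_closedBall_lt_top.ne
      have hBA : μ (closedBall y (δ * t)) = κ * μ (closedBall x R) := by
        rw [Measure.addHaar_closedBall μ y hδt.le, Measure.addHaar_closedBall μ x hR0.le,
          finrank_euclideanSpace_fin, hκ, ← mul_assoc, ← ENNReal.ofReal_mul (by positivity),
          ← mul_pow]
        congr 3
        field_simp
        ring
      have hle : μ (E ∩ closedBall x R) ≤ (1 - κ) * μ (closedBall x R) := by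
        have h1 : μ (E ∩ closedBall x R) ≤ μ (closedBall x R) - κ * μ (closedBall x R) := by
          rw [← hBA]
          exact ENNReal.le_sub_of_add_le_right measure_closedBall_lt_top.ne hadd
        have h2 : (1 - κ) * μ (closedBall x R)
            = 1 * μ (closedBall x R) - κ * μ (closedBall x R) :=
          ENNReal.sub_mul (fun _ _ => hAtop)
        rw [h2, one_mul]
        exact h1
      have hfin : μ (E ∩ closedBall x R) / μ (closedBall x R) ≤ 1 - κ := by
        calc μ (E ∩ closedBall x R) / μ (closedBall x R)
            ≤ (1 - κ) * μ (closedBall x R) / μ (closedBall x R) :=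
              ENNReal.div_le_div_right hle _
          _ = 1 - κ := by
              rw [mul_div_assoc, ENNReal.div_self hA0 hAtop, mul_one]
      exact absurd hrat (not_lt.2 hfin)
    -- use the derivative estimate
    have hder : ∀ᶠ z in 𝓝 x, ‖g z - g x - L (z - x)‖ ≤ ε * ‖z - x‖ := by
      exact Asymptotics.isLittleO_iff.1 hdiff.hasFDerivAt.isLittleO hε
    obtain ⟨ρ, hρ0, hρ⟩ := Metric.eventually_nhds_iff_ball.1 hder
    have hsmall : ∀ᶠ t in 𝓝[>] (0:ℝ), (‖v‖ + δ) * t < ρ := by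
      have hvδ : (0:ℝ) < ‖v‖ + δ := by positivity
      have : Tendsto (fun t : ℝ => (‖v‖ + δ) * t) (𝓝[>] 0) (𝓝 0) :=
        ((continuous_mul_left _).tendsto' 0 0 (mul_zero _)).mono_left nhdsWithin_le_nhds
      exact this.eventually (eventually_lt_nhds hρ0)
    obtain ⟨t, ⟨⟨z, hzE, hzball⟩, hts⟩, ht0⟩ :=
      ((hnear.and hsmall).and self_mem_nhdsWithin).exists
    have hzx : ‖z - x‖ ≤ (‖v‖ + δ) * t := by
      have h1 : ‖z - (x + t • v)‖ ≤ δ * t := by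
        rw [← dist_eq_norm]; exact hzball
      calc ‖z - x‖ = ‖(z - (x + t • v)) + t • v‖ := by congr 1; abel
        _ ≤ ‖z - (x + t • v)‖ + ‖t • v‖ := norm_add_le _ _
        _ ≤ δ * t + t * ‖v‖ := by
            refine add_le_add h1 ?_
            rw [norm_smul, Real.norm_eq_abs, abs_of_pos ht0]
        _ = (‖v‖ + δ) * t := by ring
    have hzx' : z ∈ ball x ρ := by
      rw [mem_ball, dist_eq_norm]
      exact lt_of_le_of_lt hzx hts
    have hbound := hρ z hzx'
    have hgz : g z = 0 := hzE
    rw [hgz, hx0, sub_zero, zero_sub, norm_neg] at hbound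
    -- ‖L (z - x)‖ ≤ ε * ‖z - x‖
    have hLtv : |t * L v| ≤ ‖L‖ * (δ * t) + ε * ((‖v‖ + δ) * t) := by
      have e1 : t * L v = L (z - x) - L (z - (x + t • v)) := by
        rw [← L.map_sub]
        have e2 : (z - x) - (z - (x + t • v)) = t • v := by abel
        rw [e2, L.map_smul, smul_eq_mul]
      rw [e1]
      calc |L (z - x) - L (z - (x + t • v))|
          ≤ |L (z - x)| + |L (z - (x + t • v))| := abs_sub _ _
        _ ≤ ε * ‖z - x‖ + ‖L‖ * ‖z - (x + t • v)‖ := by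
            refine add_le_add ?_ (L.le_opNorm _)
            simpa [Real.norm_eq_abs] using hbound
        _ ≤ ε * ((‖v‖ + δ) * t) + ‖L‖ * (δ * t) := by
            refine add_le_add ?_ ?_
            · exact mul_le_mul_of_nonneg_left hzx hε.le
            · refine mul_le_mul_of_nonneg_left ?_ (norm_nonneg _)
              rw [← dist_eq_norm]; exact hzball
        _ = ‖L‖ * (δ * t) + ε * ((‖v‖ + δ) * t) := by ring
    have habs : t * |L v| ≤ (‖L‖ * δ + ε * (‖v‖ + δ)) * t := by
      calc t * |L v| = |t * L v| := by rw [abs_mul, abs_of_pos ht0]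
        _ ≤ ‖L‖ * (δ * t) + ε * ((‖v‖ + δ) * t) := hLtv
        _ = (‖L‖ * δ + ε * (‖v‖ + δ)) * t := by ring
    nlinarith [habs, ht0]
  -- conclude L v = 0
  have h1 : ∀ δ > (0:ℝ), |L v| ≤ ‖L‖ * δ := by
    intro δ hδ
    refine le_of_forall_pos_le_add fun ε' hε' => ?_
    have := key δ hδ (ε' / (‖v‖ + δ)) (by positivity)
    calc |L v| ≤ ‖L‖ * δ + ε' / (‖v‖ + δ) * (‖v‖ + δ) := this
      _ = ‖L‖ * δ + ε' := by field_simp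
  have h2 : |L v| ≤ 0 := by
    refine le_of_forall_pos_le_add fun ε' hε' => ?_
    have hpos : (0:ℝ) < ε' / (‖L‖ + 1) := by positivity
    calc |L v| ≤ ‖L‖ * (ε' / (‖L‖ + 1)) := h1 _ hpos
      _ ≤ (‖L‖ + 1) * (ε' / (‖L‖ + 1)) := by
          refine mul_le_mul_of_nonneg_right (by linarith [norm_nonneg L]) hpos.le
      _ = ε' := by field_simp
      _ = 0 + ε' := by ring
  have := abs_nonneg (L v)
  have : |L v| = 0 := le_antisymm h2 this
  exact abs_eq_zero.1 this

lemma hasFDerivAt_min' {n : ℕ} {u w : EuclideanSpace ℝ (Fin n) → ℝ}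
    {x : EuclideanSpace ℝ (Fin n)} {L : EuclideanSpace ℝ (Fin n) →L[ℝ] ℝ}
    (hu : HasFDerivAt u L x) (hw : HasFDerivAt w L x) (hx : u x = w x) :
    HasFDerivAt (fun y => min (u y) (w y)) L x := by
  rw [hasFDerivAt_iff_isLittleO] at hu hw ⊢
  rw [Asymptotics.isLittleO_iff] at hu hw ⊢
  intro c hc
  filter_upwards [hu hc, hw hc] with y h1 h2
  rcases le_total (u y) (w y) with h | h
  · rw [min_eq_left h, min_eq_left (le_of_eq hx)]; exact h1
  · rw [min_eq_right h, min_eq_right (ge_of_eq hx)]; exact h2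

lemma hasFDerivAt_max' {n : ℕ} {u w : EuclideanSpace ℝ (Fin n) → ℝ}
    {x : EuclideanSpace ℝ (Fin n)} {L : EuclideanSpace ℝ (Fin n) →L[ℝ] ℝ}
    (hu : HasFDerivAt u L x) (hw : HasFDerivAt w L x) (hx : u x = w x) :
    HasFDerivAt (fun y => max (u y) (w y)) L x := by
  rw [hasFDerivAt_iff_isLittleO] at hu hw ⊢
  rw [Asymptotics.isLittleO_iff] at hu hw ⊢
  intro c hc
  filter_upwards [hu hc, hw hc] with y h1 h2
  rcases le_total (u y) (w y) with h | h
  · rw [max_eq_right h, max_eq_right hx.le]; exact h2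
  · rw [max_eq_left h, max_eq_left hx.ge]; exact h1

lemma meas_integrand {n : ℕ} (f : EuclideanSpace ℝ (Fin n) → ℝ) (hf : Continuous f) :
    Measurable (fun x => (‖gradient f x‖₊ : ℝ≥0∞) ^ 2 + if 0 < f x then (1:ℝ≥0∞) else 0) := by
  apply Measurable.fun_add
  · have h1 : Measurable fun x => gradient f x :=
      (InnerProductSpace.toDual ℝ (EuclideanSpace ℝ (Fin n))).symm.continuous.measurable.comp
        (measurable_fderiv ℝ f)
    exact ((h1.nnnorm.coe_nnreal_ennreal).pow_const 2)
  · exact Measurable.ite (isOpen_lt continuous_const hf).measurableSet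
      measurable_const measurable_const

open Topology in
lemma gradient_congr' {n : ℕ} {f g : EuclideanSpace ℝ (Fin n) → ℝ}
    {x : EuclideanSpace ℝ (Fin n)} (h : f =ᶠ[𝓝 x] g) : gradient f x = gradient g x := by
  unfold gradient
  rw [h.fderiv_eq]

lemma gradient_of_hasFDerivAt {n : ℕ} {f : EuclideanSpace ℝ (Fin n) → ℝ}
    {x : EuclideanSpace ℝ (Fin n)} {L : EuclideanSpace ℝ (Fin n) →L[ℝ] ℝ}
    (h : HasFDerivAt f L x) :
    gradient f x = (InnerProductSpace.toDual ℝ (EuclideanSpace ℝ (Fin n))).symm L := by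
  unfold gradient
  rw [h.fderiv]

open Topology in
lemma ae_sum_eq {n : ℕ} (u w : EuclideanSpace ℝ (Fin n) → ℝ)
    (hu : LocallyLipschitz u) (hw : LocallyLipschitz w) :
    ∀ᵐ x ∂(volume : Measure (EuclideanSpace ℝ (Fin n))),
      ((‖gradient (fun y => min (u y) (w y)) x‖₊ : ℝ≥0∞) ^ 2
          + (if 0 < min (u x) (w x) then (1:ℝ≥0∞) else 0))
        + ((‖gradient (fun y => max (u y) (w y)) x‖₊ : ℝ≥0∞) ^ 2
          + (if 0 < max (u x) (w x) then (1:ℝ≥0∞) else 0))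
      = ((‖gradient u x‖₊ : ℝ≥0∞) ^ 2 + (if 0 < u x then (1:ℝ≥0∞) else 0))
        + ((‖gradient w x‖₊ : ℝ≥0∞) ^ 2 + (if 0 < w x then (1:ℝ≥0∞) else 0)) := by
  have hgc : Continuous fun y => u y - w y := hu.continuous.sub hw.continuous
  filter_upwards [locallyLipschitz_ae_differentiableAt hu,
    locallyLipschitz_ae_differentiableAt hw, fderiv_ae_zero_of_zero_set hgc]
    with x hdu hdw hz
  rcases lt_trichotomy (u x) (w x) with hlt | heq | hgt
  · have hmem : {y | u y < w y} ∈ 𝓝 x :=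
      (isOpen_lt hu.continuous hw.continuous).mem_nhds hlt
    have e1 : gradient (fun y => min (u y) (w y)) x = gradient u x :=
      gradient_congr' (eventually_of_mem hmem fun y hy => min_eq_left hy.le)
    have e2 : gradient (fun y => max (u y) (w y)) x = gradient w x :=
      gradient_congr' (eventually_of_mem hmem fun y hy => max_eq_right hy.le)
    rw [e1, e2, min_eq_left hlt.le, max_eq_right hlt.le]
  · have hdg : DifferentiableAt ℝ (fun y => u y - w y) x := hdu.sub hdw
    have hz' : fderiv ℝ (fun y => u y - w y) x = 0 := hz (sub_eq_zero.2 heq) hdg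
    have hLeq : fderiv ℝ u x = fderiv ℝ w x := by
      have hsub := fderiv_fun_sub hdu hdw
      rw [hz'] at hsub
      exact sub_eq_zero.1 hsub.symm
    have hwd : HasFDerivAt w (fderiv ℝ u x) x := hLeq ▸ hdw.hasFDerivAt
    have hmin := hasFDerivAt_min' hdu.hasFDerivAt hwd heq
    have hmax := hasFDerivAt_max' hdu.hasFDerivAt hwd heq
    have e1 : gradient (fun y => min (u y) (w y)) x = gradient u x := by
      rw [gradient_of_hasFDerivAt hmin, gradient_of_hasFDerivAt hdu.hasFDerivAt]
    have e2 : gradient (fun y => max (u y) (w y)) x = gradient w x := by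
      rw [gradient_of_hasFDerivAt hmax, gradient_of_hasFDerivAt hdw.hasFDerivAt, hLeq]
    rw [e1, e2, min_eq_left heq.le, max_eq_right heq.le]
  · have hmem : {y | w y < u y} ∈ 𝓝 x :=
      (isOpen_lt hw.continuous hu.continuous).mem_nhds hgt
    have e1 : gradient (fun y => min (u y) (w y)) x = gradient w x :=
      gradient_congr' (eventually_of_mem hmem fun y hy => min_eq_right hy.le)
    have e2 : gradient (fun y => max (u y) (w y)) x = gradient u x :=
      gradient_congr' (eventually_of_mem hmem fun y hy => max_eq_left hy.le)
    rw [e1, e2, min_eq_right hgt.le, max_eq_left hgt.le, add_comm]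

/-- `J_Ω(min(u,w)) + J_Ω(max(u,w)) = J_Ω(u) + J_Ω(w)` as an identity in `[0,∞]`. -/
theorem stmt0 {n : ℕ} (hn : 2 ≤ n) (Ω : Set (EuclideanSpace ℝ (Fin n))) (hΩ : IsOpen Ω)
    (u w : EuclideanSpace ℝ (Fin n) → ℝ)
    (hu0 : ∀ x, 0 ≤ u x) (hw0 : ∀ x, 0 ≤ w x)
    (hu : LocallyLipschitz u) (hw : LocallyLipschitz w) :
    JE Ω (fun x => min (u x) (w x)) + JE Ω (fun x => max (u x) (w x))
      = JE Ω u + JE Ω w := by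
  unfold JE
  rw [← lintegral_add_left (meas_integrand (fun x => min (u x) (w x))
      (hu.continuous.min hw.continuous)),
    ← lintegral_add_left (meas_integrand u hu.continuous)]
  exact lintegral_congr_ae (ae_restrict_of_ae (ae_sum_eq u w hu hw))
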